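/- Fix n ≥ 2, k ≥ 1, and p ≥ 1. The number of pairs (x, y) ∈ G_p × G_p such that the reduced word of x has length at least k+1 with k-th letter a_2^{−1} and (k+1)-st letter a_1, and the reduced word of y has length at least k with first k letters equal to the first k letters of the reduced word of x, is exactly 𝒮(k+1,p)·𝒮(k,p)/(2n(2n−1)·𝒲(k)), which equals 𝒮(k,p)·𝒮(k+1,p)/(2n·𝒲(k+1)). -/

import Mathlib

open List

variable {α : Type*} [DecidableEq α]

/-- The no-cancellation relation on letters. -/
def RelR (a b : α × Bool) : Prop := ¬(a.1 = b.1 ∧ a.2 = !b.2)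

/-- A word is reduced. -/
abbrev RedW (L : List (α × Bool)) : Prop := List.Chain' RelR L

instance : DecidablePred (RedW (α := α)) := fun _ => by unfold RedW RelR List.Chain'; infer_instance

lemma redW_reduce_eq_self {L : List (α × Bool)} (h : RedW L) : FreeGroup.reduce L = L := by
  induction L with
  | nil => rfl
  | cons x tl ih =>
    obtain ⟨h1, h2⟩ := List.isChain_cons.mp h
    rw [FreeGroup.reduce.cons, ih h2]
    cases tl with
    | nil => rfl
    | cons hd tl2 =>
      have := h1 hd (by simp)
      simp only [RelR] at this
      simp [this]

lemma redW_reduce (L : List (α × Bool)) : RedW (FreeGroup.reduce L) := by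
  induction L with
  | nil => constructor
  | cons x tl ih =>
    rw [FreeGroup.reduce.cons]
    rcases h : FreeGroup.reduce tl with _ | ⟨hd, tl2⟩
    · exact List.isChain_singleton _
    · rw [h] at ih
      dsimp only
      split_ifs with hc
      · exact ih.tail
      · exact List.isChain_cons.2 ⟨fun y hy => by simp_all [RelR], ih⟩

lemma redW_toWord (x : FreeGroup α) : RedW x.toWord := by
  rw [← FreeGroup.reduce_toWord]; exact redW_reduce _

lemma toWord_mk_of_redW {L : List (α × Bool)} (h : RedW L) : (FreeGroup.mk L).toWord = L := by
  rw [FreeGroup.toWord_mk, redW_reduce_eq_self h]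

open List Finset

lemma ncard_fiberwise {γ ι : Type*} [DecidableEq ι] {S : Set γ} (hS : S.Finite) (f : γ → ι)
    (s : Finset ι) (h : ∀ x ∈ S, f x ∈ s) :
    S.ncard = ∑ i ∈ s, {x | x ∈ S ∧ f x = i}.ncard := by
  classical
  rw [Set.ncard_eq_toFinset_card _ hS]
  rw [Finset.card_eq_sum_card_fiberwise (f := f) (t := s)
    (fun x hx => h x (hS.mem_toFinset.mp hx))]
  refine Finset.sum_congr rfl fun i _ => ?_
  have : {x | x ∈ S ∧ f x = i} = ↑(hS.toFinset.filter (fun x => f x = i)) := by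
    ext x; simp [hS.mem_toFinset]
  rw [this, Set.ncard_coe_finset]

lemma sum_ncard_slices {γ ι : Type*} [Fintype ι] {S : Set γ} (hS : S.Finite)
    (T : ι → γ → Prop) (q : ℕ) (h : ∀ x ∈ S, {i | T i x}.ncard = q) :
    ∑ i : ι, {x | x ∈ S ∧ T i x}.ncard = S.ncard * q := by
  classical
  have e1 : ∀ i : ι, {x | x ∈ S ∧ T i x}.ncard = (hS.toFinset.filter (fun x => T i x)).card := by
    intro i
    have : {x | x ∈ S ∧ T i x} = ↑(hS.toFinset.filter (fun x => T i x)) := by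
      ext x; simp [hS.mem_toFinset]
    rw [this, Set.ncard_coe_finset]
  simp only [e1, Finset.card_filter]
  rw [Finset.sum_comm]
  have inner : ∀ x ∈ hS.toFinset, (∑ i : ι, if T i x then 1 else 0) = q := by
    intro x hx
    have h2 : {i | T i x} = ↑(Finset.univ.filter (fun i => T i x)) := by ext i; simp
    rw [← h x (hS.mem_toFinset.mp hx), h2, Set.ncard_coe_finset, Finset.card_filter]
  rw [Finset.sum_congr rfl inner, Finset.sum_const, smul_eq_mul,
    Set.ncard_eq_toFinset_card _ hS]

lemma ncard_prod {γ δ : Type*} (s : Set γ) (t : Set δ) :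
    (s ×ˢ t).ncard = s.ncard * t.ncard := by
  rw [← Nat.card_coe_set_eq, ← Nat.card_coe_set_eq, ← Nat.card_coe_set_eq,
    Nat.card_congr (Equiv.Set.prod s t), Nat.card_prod]

open List Finset

section GenericCounting
variable {α : Type*} [Fintype α] [DecidableEq α]

lemma relR_iff (a c : α × Bool) : RelR a c ↔ c ≠ (a.1, !a.2) := by
  unfold RelR
  constructor
  · rintro h rfl; exact h ⟨rfl, by simp⟩
  · rintro h ⟨h1, h2⟩
    exact h (Prod.ext h1.symm (by cases ha : a.2 <;> cases hc : c.2 <;> simp_all))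

lemma ncard_relR (a : α × Bool) : {c : α × Bool | RelR a c}.ncard = 2 * Fintype.card α - 1 := by
  have : {c : α × Bool | RelR a c} = ↑(Finset.univ.erase (a.1, !a.2)) := by
    ext c; simp [relR_iff]
  rw [this, Set.ncard_coe_finset, Finset.card_erase_of_mem (Finset.mem_univ _)]
  simp [Fintype.card_prod, mul_comm]

/-- Reduced words of length exactly `m` extending the prefix `u`. -/
def ExactSet (u : List (α × Bool)) (m : ℕ) : Set (List (α × Bool)) :=
  {L | RedW L ∧ L.length = m ∧ L.take u.length = u}

/-- Reduced words of length at most `b` extending the prefix `u`. -/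
def SetLe (u : List (α × Bool)) (b : ℕ) : Set (List (α × Bool)) :=
  {L | RedW L ∧ L.length ≤ b ∧ L.take u.length = u}

lemma exactSet_finite (u : List (α × Bool)) (m : ℕ) : (ExactSet u m).Finite :=
  (List.finite_length_le (α × Bool) m).subset (fun L hL => le_of_eq hL.2.1)

lemma setLe_finite (u : List (α × Bool)) (b : ℕ) : (SetLe u b).Finite :=
  (List.finite_length_le (α × Bool) b).subset (fun L hL => hL.2.1)

lemma length_ge_of_take {u L : List (α × Bool)} (h : L.take u.length = u) :
    u.length ≤ L.length := by
  have := congrArg List.length h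
  simp only [List.length_take] at this
  omega

lemma ncard_exactSet {u : List (α × Bool)} (hu : RedW u) (hne : u ≠ []) (j : ℕ) :
    (ExactSet u (u.length + j)).ncard = (2 * Fintype.card α - 1) ^ j := by
  induction j with
  | zero =>
    have : ExactSet u (u.length + 0) = {u} := by
      ext L
      simp only [ExactSet, Set.mem_setOf_eq, Set.mem_singleton_iff, Nat.add_zero]
      constructor
      · rintro ⟨h1, h2, h3⟩
        rw [← h3, List.take_of_length_le (le_of_eq h2)]
      · rintro rfl
        exact ⟨hu, rfl, List.take_of_length_le le_rfl⟩
    rw [this, Set.ncard_singleton, pow_zero]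
  | succ j ih =>
    set m := u.length + j with hm
    rw [show u.length + (j + 1) = m + 1 from by omega]
    have hfin : (ExactSet u (m + 1)).Finite := exactSet_finite u (m + 1)
    have hmem : ∀ L ∈ ExactSet u (m + 1), L.getLast? ∈ (Finset.univ : Finset (Option (α × Bool))) :=
      fun L _ => Finset.mem_univ _
    rw [ncard_fiberwise hfin (fun L => L.getLast?) Finset.univ hmem]
    rw [Fintype.sum_option]
    have hnone : {L | L ∈ ExactSet u (m + 1) ∧ L.getLast? = none} = ∅ := by
      ext L
      simp only [Set.mem_setOf_eq, Set.mem_empty_iff_false, iff_false, not_and]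
      intro hL
      have : L ≠ [] := by
        intro h; rw [h] at hL; exact absurd hL.2.1 (by simp)
      simp [List.getLast?_eq_none_iff, this]
    rw [hnone, Set.ncard_empty, zero_add]
    have hfib : ∀ c : α × Bool,
        {L | L ∈ ExactSet u (m + 1) ∧ L.getLast? = some c} =
        (fun L => L ++ [c]) '' {L | L ∈ ExactSet u m ∧ ∀ a ∈ L.getLast?, RelR a c} := by
      intro c
      ext L
      constructor
      · rintro ⟨⟨h1, h2, h3⟩, h4⟩
        have hLne : L ≠ [] := by intro h; rw [h] at h2; simp at h2
        refine ⟨L.dropLast, ⟨⟨?_, ?_, ?_⟩, ?_⟩, ?_⟩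
        · rw [List.dropLast_eq_take]; exact h1.take _
        · rw [List.length_dropLast, h2]; omega
        · rw [List.dropLast_eq_take, List.take_take]
          have hul : u.length ≤ m := by
            have := length_ge_of_take h3; omega
          rw [min_eq_left (by rw [h2]; omega)]
          exact h3
        · intro a ha
          have hL : L = L.dropLast ++ [L.getLast hLne] := (List.dropLast_append_getLast hLne).symm
          have this1 : RedW (L.dropLast ++ [L.getLast hLne]) := hL ▸ h1
          have this2 := List.isChain_append.mp this1
          have hc : L.getLast hLne = c := by
            have := List.getLast?_eq_getLast hLne ▸ h4
            injection this
          exact hc ▸ this2.2.2 a ha _ rfl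
        · have hL : L = L.dropLast ++ [L.getLast hLne] := (List.dropLast_append_getLast hLne).symm
          have hc : L.getLast hLne = c := by
            have := List.getLast?_eq_getLast hLne ▸ h4
            injection this
          rw [← hc]; exact hL.symm
      · rintro ⟨L', ⟨⟨h1, h2, h3⟩, h4⟩, rfl⟩
        have hul : u.length ≤ m := by have := length_ge_of_take h3; omega
        refine ⟨⟨?_, ?_, ?_⟩, ?_⟩
        · exact List.isChain_append.mpr ⟨h1, List.isChain_singleton _, fun a ha y hy => by
            simp at hy; subst hy; exact h4 a ha⟩
        · simp [h2]
        · rw [List.take_append_of_le_length (by omega : u.length ≤ L'.length)]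
          exact h3
        · simp
    have himg : ∀ c : α × Bool,
        {L | L ∈ ExactSet u (m + 1) ∧ L.getLast? = some c}.ncard =
        {L | L ∈ ExactSet u m ∧ ∀ a ∈ L.getLast?, RelR a c}.ncard := by
      intro c
      rw [hfib c]
      exact Set.ncard_image_of_injective _ (fun L1 L2 h => List.append_cancel_right h)
    simp only [himg]
    have := sum_ncard_slices (exactSet_finite u m)
      (fun c L => ∀ a ∈ L.getLast?, RelR a c) (2 * Fintype.card α - 1) ?_
    · rw [this, ih, ← pow_succ]
    · intro L hL
      have hLne : L ≠ [] := by
        intro h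
        obtain ⟨-, h2, -⟩ := hL
        rw [h] at h2
        have := List.length_pos_iff.2 hne
        simp at h2
        omega
      have hlast : L.getLast? = some (L.getLast hLne) := List.getLast?_eq_getLast hLne
      have : {c | ∀ a ∈ L.getLast?, RelR a c} = {c | RelR (L.getLast hLne) c} := by
        ext c; rw [hlast]; simp
      rw [this, ncard_relR]
lemma ncard_setLe {u : List (α × Bool)} (hu : RedW u) (hne : u ≠ []) (b : ℕ) :
    (SetLe u b).ncard = ∑ i ∈ Finset.range (b + 1 - u.length), (2 * Fintype.card α - 1) ^ i := by
  have hu1 : 1 ≤ u.length := List.length_pos_iff.2 hne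
  induction b with
  | zero =>
    have h0 : SetLe u 0 = ∅ := by
      ext L
      simp only [SetLe, Set.mem_setOf_eq, Set.mem_empty_iff_false, iff_false]
      rintro ⟨h1, h2, h3⟩
      have := length_ge_of_take h3
      omega
    rw [h0, Set.ncard_empty, show 0 + 1 - u.length = 0 from by omega, Finset.range_zero,
      Finset.sum_empty]
  | succ b ih =>
    have hsplit : SetLe u (b + 1) = SetLe u b ∪ ExactSet u (b + 1) := by
      ext L
      simp only [SetLe, ExactSet, Set.mem_setOf_eq, Set.mem_union]
      constructor
      · rintro ⟨h1, h2, h3⟩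
        rcases Nat.lt_or_ge L.length (b + 1) with h | h
        · exact Or.inl ⟨h1, by omega, h3⟩
        · exact Or.inr ⟨h1, by omega, h3⟩
      · rintro (⟨h1, h2, h3⟩ | ⟨h1, h2, h3⟩)
        exacts [⟨h1, by omega, h3⟩, ⟨h1, by omega, h3⟩]
    have hdisj : Disjoint (SetLe u b) (ExactSet u (b + 1)) := by
      rw [Set.disjoint_left]
      rintro L ⟨-, h2, -⟩ ⟨-, h4, -⟩
      omega
    rw [hsplit, Set.ncard_union_eq hdisj (setLe_finite u b) (exactSet_finite u (b + 1)), ih]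
    by_cases h : u.length ≤ b + 1
    · have he : ExactSet u (b + 1) = ExactSet u (u.length + (b + 1 - u.length)) := by
        rw [show u.length + (b + 1 - u.length) = b + 1 from by omega]
      rw [he, ncard_exactSet hu hne,
        show b + 1 + 1 - u.length = (b + 1 - u.length) + 1 from by omega, Finset.sum_range_succ]
    · have he : ExactSet u (b + 1) = ∅ := by
        ext L
        simp only [ExactSet, Set.mem_setOf_eq, Set.mem_empty_iff_false, iff_false]
        rintro ⟨h1, h2, h3⟩
        have := length_ge_of_take h3
        omega
      rw [he, Set.ncard_empty, show b + 1 + 1 - u.length = b + 1 - u.length from by omega, add_zero]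

lemma ncard_redLe (p : ℕ) :
    {L : List (α × Bool) | RedW L ∧ L.length ≤ p}.ncard
      = 1 + (2 * Fintype.card α) * ∑ i ∈ Finset.range p, (2 * Fintype.card α - 1) ^ i := by
  have hfin : {L : List (α × Bool) | RedW L ∧ L.length ≤ p}.Finite :=
    (List.finite_length_le (α × Bool) p).subset (fun L hL => hL.2)
  rw [ncard_fiberwise hfin (fun L => L.head?) Finset.univ (fun _ _ => Finset.mem_univ _),
    Fintype.sum_option]
  have hnone : {L | L ∈ {L : List (α × Bool) | RedW L ∧ L.length ≤ p} ∧ L.head? = none}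
      = {([] : List (α × Bool))} := by
    ext L
    constructor
    · rintro ⟨-, h⟩
      simpa [List.head?_eq_none_iff] using h
    · rintro rfl
      exact ⟨⟨List.isChain_nil, by simp⟩, rfl⟩
  have hsome : ∀ c : α × Bool,
      {L | L ∈ {L : List (α × Bool) | RedW L ∧ L.length ≤ p} ∧ L.head? = some c}
        = SetLe [c] p := by
    intro c
    ext L
    constructor
    · rintro ⟨⟨h1, h2⟩, h3⟩
      refine ⟨h1, h2, ?_⟩
      cases L with
      | nil => simp at h3
      | cons a tl =>
        simp only [List.head?_cons, Option.some.injEq] at h3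
        subst h3
        rfl
    · rintro ⟨h1, h2, h3⟩
      refine ⟨⟨h1, h2⟩, ?_⟩
      cases L with
      | nil => simp at h3
      | cons a tl =>
        have : a = c := by
          have : [a].append (tl.take 0) = [c] := h3
          simpa using this
        simp [this]
  rw [hnone, Set.ncard_singleton]
  have hsum : ∀ c : α × Bool,
      {L | L ∈ {L : List (α × Bool) | RedW L ∧ L.length ≤ p} ∧ L.head? = some c}.ncard
        = ∑ i ∈ Finset.range p, (2 * Fintype.card α - 1) ^ i := by
    intro c
    rw [hsome c, ncard_setLe (List.isChain_singleton c) (by simp) p]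
    norm_num
  rw [Finset.sum_congr rfl (fun c _ => hsum c), Finset.sum_const, Finset.card_univ, smul_eq_mul]
  congr 1
  rw [Fintype.card_prod, Fintype.card_bool]
  ring

lemma ncard_toWord_set (Q : List (α × Bool) → Prop) :
    {x : FreeGroup α | Q x.toWord}.ncard = {L | RedW L ∧ Q L}.ncard := by
  rw [← Set.ncard_image_of_injective _ FreeGroup.toWord_injective]
  congr 1
  ext L
  constructor
  · rintro ⟨x, hx, rfl⟩
    exact ⟨redW_toWord x, hx⟩
  · rintro ⟨h1, h2⟩
    refine ⟨FreeGroup.mk L, ?_, toWord_mk_of_redW h1⟩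
    show Q (FreeGroup.mk L).toWord
    rwa [toWord_mk_of_redW h1]

lemma ncard_toWord_set2 (Q : List (α × Bool) → List (α × Bool) → Prop) :
    {z : FreeGroup α × FreeGroup α | Q z.1.toWord z.2.toWord}.ncard
      = {z : List (α × Bool) × List (α × Bool) | RedW z.1 ∧ RedW z.2 ∧ Q z.1 z.2}.ncard := by
  rw [← Set.ncard_image_of_injective _
    (Prod.map_injective.mpr ⟨FreeGroup.toWord_injective, FreeGroup.toWord_injective⟩)]
  congr 1
  ext z
  constructor
  · rintro ⟨⟨x, y⟩, hxy, rfl⟩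
    exact ⟨redW_toWord x, redW_toWord y, hxy⟩
  · rintro ⟨h1, h2, h3⟩
    refine ⟨(FreeGroup.mk z.1, FreeGroup.mk z.2), ?_, ?_⟩
    · simpa [toWord_mk_of_redW h1, toWord_mk_of_redW h2] using h3
    · simp [Prod.map, toWord_mk_of_redW h1, toWord_mk_of_redW h2]

lemma relR_symm {a b : α × Bool} (h : RelR a b) : RelR b a := by
  rintro ⟨e1, e2⟩
  exact h ⟨e1.symm, by cases ha : a.2 <;> cases hb : b.2 <;> simp_all⟩

lemma redW_reverse {L : List (α × Bool)} (h : RedW L) : RedW L.reverse :=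
  List.isChain_reverse.mpr (List.IsChain.imp (fun _ _ hh => relR_symm hh) h)

lemma take_one_eq {L : List (α × Bool)} {d : α × Bool} :
    L.take 1 = [d] ↔ L.head? = some d := by
  cases L <;> simp

lemma ncard_lastLetter (d : α × Bool) (k : ℕ) (hk : 1 ≤ k) :
    {w : List (α × Bool) | RedW w ∧ w.length = k ∧ w.getLast? = some d}.ncard
      = (2 * Fintype.card α - 1) ^ (k - 1) := by
  have himg : {w : List (α × Bool) | RedW w ∧ w.length = k ∧ w.getLast? = some d}
      = List.reverse '' (ExactSet [d] k) := by
    ext w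
    constructor
    · rintro ⟨h1, h2, h3⟩
      refine ⟨w.reverse, ⟨redW_reverse h1, by simp [h2], ?_⟩, by simp⟩
      show w.reverse.take 1 = [d]
      rw [take_one_eq, List.head?_reverse]
      exact h3
    · rintro ⟨L, ⟨h1, h2, h3⟩, rfl⟩
      refine ⟨redW_reverse h1, by simp [h2], ?_⟩
      rw [List.getLast?_reverse]
      rw [show ([d] : List (α × Bool)).length = 1 from rfl] at h3
      exact take_one_eq.mp h3
  rw [himg, Set.ncard_image_of_injective _ List.reverse_injective]
  have he : ExactSet [d] k = ExactSet [d] (([d] : List (α × Bool)).length + (k - 1)) := by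
    rw [show ([d] : List (α × Bool)).length + (k - 1) = k from by simp; omega]
  rw [he, ncard_exactSet (List.isChain_singleton d) (by simp)]

end GenericCounting

/-- `Gcard n p` is the number of elements of the rank-`n` free group whose reduced word
has length at most `p` (the cardinality of `G_p`). -/
noncomputable def Gcard (n p : ℕ) : ℕ :=
  {w : FreeGroup (Fin n) | w.toWord.length ≤ p}.ncard

/-- `Scard n k p = |G_p| − |G_{k−1}|` is the number of elements of the rank-`n` free
group whose reduced word has length between `k` and `p`. -/
noncomputable def Scard (n k p : ℕ) : ℕ := Gcard n p - Gcard n (k - 1)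

/-- `Wcard n k = 2n(2n−1)^{k−1}` is the number of elements of the rank-`n` free group
whose reduced word has length exactly `k` (for `k ≥ 1`). -/
def Wcard (n k : ℕ) : ℕ := 2 * n * (2 * n - 1) ^ (k - 1)



section Formulas

lemma gcard_eq (n p : ℕ) :
    Gcard n p = 1 + (2 * n) * ∑ i ∈ Finset.range p, (2 * n - 1) ^ i := by
  unfold Gcard
  rw [ncard_toWord_set (fun L => L.length ≤ p), ncard_redLe p, Fintype.card_fin]

lemma scard_eq (n k p : ℕ) (hk : 1 ≤ k) :
    Scard n k p = 2 * n * (2 * n - 1) ^ (k - 1) *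
      ∑ i ∈ Finset.range (p + 1 - k), (2 * n - 1) ^ i := by
  unfold Scard
  rw [gcard_eq, gcard_eq]
  by_cases h : k - 1 ≤ p
  · have hsplit : ∑ i ∈ Finset.range p, (2 * n - 1) ^ i
        = ∑ i ∈ Finset.range (k - 1), (2 * n - 1) ^ i
          + ∑ i ∈ Finset.Ico (k - 1) p, (2 * n - 1) ^ i := by
      rw [Finset.range_eq_Ico, Finset.range_eq_Ico]
      exact (Finset.sum_Ico_consecutive (fun i => (2 * n - 1) ^ i) (Nat.zero_le _) h).symm
    rw [hsplit, mul_add]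
    have e : (1 + (2 * n * ∑ i ∈ Finset.range (k - 1), (2 * n - 1) ^ i
        + 2 * n * ∑ i ∈ Finset.Ico (k - 1) p, (2 * n - 1) ^ i))
        - (1 + 2 * n * ∑ i ∈ Finset.range (k - 1), (2 * n - 1) ^ i)
        = 2 * n * ∑ i ∈ Finset.Ico (k - 1) p, (2 * n - 1) ^ i := by omega
    rw [e, Finset.sum_Ico_eq_sum_range, show p - (k - 1) = p + 1 - k from by omega]
    simp_rw [pow_add]
    rw [← Finset.mul_sum]
    ring
  · have h1 : p ≤ k - 1 := by omega
    have hmono : (∑ i ∈ Finset.range p, (2 * n - 1) ^ i)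
        ≤ ∑ i ∈ Finset.range (k - 1), (2 * n - 1) ^ i :=
      Finset.sum_le_sum_of_subset (Finset.range_subset_range.2 h1)
    have hle : 1 + (2 * n) * ∑ i ∈ Finset.range p, (2 * n - 1) ^ i
        ≤ 1 + (2 * n) * ∑ i ∈ Finset.range (k - 1), (2 * n - 1) ^ i :=
      Nat.add_le_add_left (Nat.mul_le_mul le_rfl hmono) 1
    rw [Nat.sub_eq_zero_of_le hle, show p + 1 - k = 0 from by omega, Finset.range_zero,
      Finset.sum_empty, mul_zero]

end Formulas

/-- Fix `n ≥ 2`, `k ≥ 1`, and `p ≥ 1`. The number of pairs `(x, y) ∈ G_p × G_p` such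
that the reduced word of `x` has length at least `k+1` with `k`-th letter `a₂⁻¹` and
`(k+1)`-st letter `a₁`, and the reduced word of `y` has length at least `k` with first
`k` letters equal to the first `k` letters of the reduced word of `x`, is exactly
`𝒮(k+1,p)·𝒮(k,p)/(2n(2n−1)·𝒲(k))`, which equals `𝒮(k,p)·𝒮(k+1,p)/(2n·𝒲(k+1))`. -/
theorem count_case_two (n k p : ℕ) (hn : 2 ≤ n) (hk : 1 ≤ k) (hp : 1 ≤ p)
    (P : Set (FreeGroup (Fin n) × FreeGroup (Fin n)))
    (hP : P = {xy | xy.1.toWord.length ≤ p ∧ xy.2.toWord.length ≤ p ∧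
      k + 1 ≤ xy.1.toWord.length ∧
      xy.1.toWord[k - 1]? = some (⟨1, by omega⟩, false) ∧
      xy.1.toWord[k]? = some (⟨0, by omega⟩, true) ∧
      k ≤ xy.2.toWord.length ∧
      xy.2.toWord.take k = xy.1.toWord.take k}) :
    (P.ncard : ℝ) =
      (Scard n (k + 1) p : ℝ) * (Scard n k p : ℝ) /
        (2 * n * (2 * (n : ℝ) - 1) * (Wcard n k : ℝ)) ∧
    (Scard n (k + 1) p : ℝ) * (Scard n k p : ℝ) /
        (2 * n * (2 * (n : ℝ) - 1) * (Wcard n k : ℝ)) =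
      (Scard n k p : ℝ) * (Scard n (k + 1) p : ℝ) / (2 * n * (Wcard n (k + 1) : ℝ)) := by
  have hcard : Fintype.card (Fin n) = n := Fintype.card_fin n
  set a2 : Fin n × Bool := (⟨1, by omega⟩, false) with ha2
  set c0 : Fin n × Bool := (⟨0, by omega⟩, true) with hc0
  set A : ℕ := ∑ i ∈ Finset.range (p - k), (2 * n - 1) ^ i with hA
  set B : ℕ := ∑ i ∈ Finset.range (p + 1 - k), (2 * n - 1) ^ i with hB
  -- transfer to words
  have h1 := ncard_toWord_set2 (α := Fin n) (fun L M => L.length ≤ p ∧ M.length ≤ p ∧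
    k + 1 ≤ L.length ∧ L[k - 1]? = some a2 ∧ L[k]? = some c0 ∧ k ≤ M.length ∧
    M.take k = L.take k)
  set P' : Set (List (Fin n × Bool) × List (Fin n × Bool)) :=
    {z | RedW z.1 ∧ RedW z.2 ∧ (z.1.length ≤ p ∧ z.2.length ≤ p ∧
      k + 1 ≤ z.1.length ∧ z.1[k - 1]? = some a2 ∧ z.1[k]? = some c0 ∧ k ≤ z.2.length ∧
      z.2.take k = z.1.take k)} with hP'def
  -- the W* set
  set W : Set (List (Fin n × Bool)) :=
    {w | RedW w ∧ w.length = k ∧ w.getLast? = some a2} with hWdef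
  have hWfin : W.Finite :=
    (List.finite_length_le (Fin n × Bool) k).subset (fun w hw => le_of_eq hw.2.1)
  have hWcard : W.ncard = (2 * n - 1) ^ (k - 1) := by
    rw [hWdef]
    rw [ncard_lastLetter a2 k hk, hcard]
  have hP'fin : P'.Finite :=
    ((List.finite_length_le (Fin n × Bool) p).prod
      (List.finite_length_le (Fin n × Bool) p)).subset
      (fun z hz => ⟨hz.2.2.1, hz.2.2.2.1⟩)
  have hmemW : ∀ z ∈ P', z.1.take k ∈ hWfin.toFinset := by
    rintro ⟨L, M⟩ ⟨r1, r2, c1, c2, c3, c4, c5, c6, c7⟩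
    dsimp only at r1 r2 c1 c2 c3 c4 c5 c6 c7 ⊢
    rw [Set.Finite.mem_toFinset]
    refine ⟨r1.take k, ?_, ?_⟩
    · rw [List.length_take]
      exact min_eq_left (by omega)
    · have e1 : (L.take k)[k - 1]? = L[k - 1]? := by
        rw [List.getElem?_take]
        exact if_pos (by omega)
      rw [List.getLast?_eq_getElem?, List.length_take, min_eq_left (by omega : k ≤ L.length),
        e1]
      exact c4
  -- fibers
  have hfib : ∀ w ∈ hWfin.toFinset,
      {z | z ∈ P' ∧ z.1.take k = w} = SetLe (w ++ [c0]) p ×ˢ SetLe w p := by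
    intro w hw
    rw [Set.Finite.mem_toFinset] at hw
    obtain ⟨hw1, hw2, hw3⟩ := hw
    have hl1 : (w ++ [c0]).length = k + 1 := by simp [hw2]
    ext ⟨L, M⟩
    constructor
    · rintro ⟨⟨r1, r2, c1, c2, c3, c4, c5, c6, c7⟩, htk⟩
      dsimp only at r1 r2 c1 c2 c3 c4 c5 c6 c7 htk ⊢
      refine ⟨⟨r1, c1, ?_⟩, ⟨r2, c2, ?_⟩⟩
      · show L.take (w ++ [c0]).length = w ++ [c0]
        rw [hl1, List.take_succ, htk, c5]
        rfl
      · show M.take w.length = w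
        rw [hw2, c7, htk]
    · rintro ⟨⟨r1, l1, t1⟩, ⟨r2, l2, t2⟩⟩
      dsimp only at r1 l1 t1 r2 l2 t2 ⊢
      have hlenL : k + 1 ≤ L.length := by
        have := length_ge_of_take t1
        omega
      have hlenM : k ≤ M.length := by
        have := length_ge_of_take t2
        omega
      have t1' : L.take (k + 1) = w ++ [c0] := by rw [← hl1]; exact t1
      have htk : L.take k = w := by
        have e1 : L.take k = (L.take (k + 1)).take k := by
          rw [List.take_take, min_eq_left (by omega)]
        have e2 : (w ++ [c0]).take w.length = w := List.take_left (l₁ := w) (l₂ := [c0])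
        rw [e1, t1', ← hw2] at *
        rw [hw2] at e2 ⊢
        exact hw2 ▸ e2
      have hMk : M.take k = w := by rw [← hw2]; exact t2
      have hgetk : L[k]? = some c0 := by
        have h5 : L.take (k + 1) = L.take k ++ L[k]?.toList := List.take_succ
        rw [t1', htk] at h5
        have := List.append_cancel_left h5
        cases hh : L[k]? with
        | none => rw [hh] at this; simp at this
        | some a => rw [hh] at this; simp at this; rw [this]
      have hgetk1 : L[k - 1]? = some a2 := by
        have e1 : (L.take k)[k - 1]? = L[k - 1]? := by
          rw [List.getElem?_take]
          exact if_pos (by omega)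
        have e2 : w.getLast? = w[k - 1]? := by rw [List.getLast?_eq_getElem?, hw2]
        rw [← e1, htk, ← e2]
        exact hw3
      exact ⟨⟨r1, r2, l1, l2, hlenL, hgetk1, hgetk, hlenM, by rw [hMk, htk]⟩, htk⟩
  have hval : ∀ w ∈ hWfin.toFinset, {z | z ∈ P' ∧ z.1.take k = w}.ncard = A * B := by
    intro w hw
    have hwW := (Set.Finite.mem_toFinset hWfin).mp hw
    obtain ⟨hw1, hw2, hw3⟩ := hwW
    have hl1 : (w ++ [c0]).length = k + 1 := by simp [hw2]
    have hRuc : RedW (w ++ [c0]) := by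
      refine List.isChain_append.mpr ⟨hw1, List.isChain_singleton _, ?_⟩
      intro x hx y hy
      simp only [List.head?_cons, Option.mem_def, Option.some.injEq] at hy
      subst hy
      rw [hw3] at hx
      simp only [Option.mem_def, Option.some.injEq] at hx
      subst hx
      rintro ⟨e1, -⟩
      simp [ha2, hc0, Fin.ext_iff] at e1
    have hwne : w ≠ [] := by
      intro h; rw [h] at hw2; simp at hw2; omega
    rw [hfib w hw, ncard_prod, ncard_setLe hRuc (by simp), ncard_setLe hw1 hwne,
      hl1, hw2, hcard, show p + 1 - (k + 1) = p - k from by omega]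
  have hP'card : P'.ncard = (2 * n - 1) ^ (k - 1) * (A * B) := by
    rw [ncard_fiberwise hP'fin (fun z => z.1.take k) hWfin.toFinset hmemW,
      Finset.sum_congr rfl hval, Finset.sum_const, smul_eq_mul,
      ← Set.ncard_eq_toFinset_card W hWfin, hWcard]
  have hPc : P.ncard = (2 * n - 1) ^ (k - 1) * (A * B) := by
    rw [hP]
    rw [h1]
    exact hP'card
  -- Scard formulas
  have hS1 : Scard n (k + 1) p = 2 * n * (2 * n - 1) ^ k * A := by
    rw [scard_eq n (k + 1) p (by omega), Nat.add_sub_cancel,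
      show p + 1 - (k + 1) = p - k from by omega, ← hA]
  have hS2 : Scard n k p = 2 * n * (2 * n - 1) ^ (k - 1) * B := scard_eq n k p hk
  have hWk : (Wcard n k : ℕ) = 2 * n * (2 * n - 1) ^ (k - 1) := rfl
  have hQ : (2 * (n : ℝ) - 1) = ((2 * n - 1 : ℕ) : ℝ) := by
    rw [Nat.cast_sub (by omega : 1 ≤ 2 * n)]
    push_cast
    ring
  have hQ0 : ((2 * n - 1 : ℕ) : ℝ) ≠ 0 := by
    have h0 : (0 : ℝ) < ((2 * n - 1 : ℕ) : ℝ) := by exact_mod_cast (by omega : 0 < 2 * n - 1)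
    exact ne_of_gt h0
  have hn0 : (n : ℝ) ≠ 0 := by
    have h0 : (0 : ℝ) < (n : ℝ) := by exact_mod_cast (by omega : 0 < n)
    exact ne_of_gt h0
  have hpow : ((2 * n - 1 : ℕ) : ℝ) ^ k = ((2 * n - 1 : ℕ) : ℝ) ^ (k - 1) * ((2 * n - 1 : ℕ) : ℝ) := by
    rw [← pow_succ, show k - 1 + 1 = k from by omega]
  have hpw0 : ((2 * n - 1 : ℕ) : ℝ) ^ (k - 1) ≠ 0 := pow_ne_zero _ hQ0
  have hn2 : (2 : ℝ) ≤ (n : ℝ) := by exact_mod_cast hn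
  constructor
  · have hWpos : (0 : ℝ) < (Wcard n k : ℝ) := by
      have h1 : 0 < 2 * n := by omega
      have h2 : 0 < (2 * n - 1) ^ (k - 1) := pow_pos (by omega) _
      exact_mod_cast Nat.mul_pos h1 h2
    have hden : (2 * (n : ℝ) * (2 * (n : ℝ) - 1) * (Wcard n k : ℝ)) ≠ 0 :=
      mul_ne_zero (mul_ne_zero (by nlinarith) (by nlinarith)) (ne_of_gt hWpos)
    rw [hPc, hS1, hS2, eq_div_iff hden, hWk]
    push_cast
    rw [hQ, hpow]
    ring
  · have hW2 : (Wcard n (k + 1) : ℕ) = (2 * n - 1) * Wcard n k := by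
      show 2 * n * (2 * n - 1) ^ (k + 1 - 1) = (2 * n - 1) * (2 * n * (2 * n - 1) ^ (k - 1))
      rw [Nat.add_sub_cancel,
        show (2 * n - 1) ^ k = (2 * n - 1) ^ (k - 1) * (2 * n - 1) from by
          rw [← pow_succ, show k - 1 + 1 = k from by omega]]
      ring
    rw [hW2, hQ]
    push_cast
    ring
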